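/- For a C*-category A and objects x, y, the Yoneda functor ι_A sending a ∈ A(x,y) to the operator h_x → h_y given by postcomposition with a is an isometric C*-functor whose image is exactly the compact operators K(h_x, h_y). If A is unital then ι_A is moreover full, i.e. every bounded adjointable operator h_x → h_y is of this form. -/

import Mathlib

universe u u' v v'

open Filter Topology

/-- A (possibly non-unital) C*-category structure on a family of hom-spaces:
a category enriched in complex Banach spaces, with contractive composition and a
conjugate-linear involution satisfying the C*-identity and positivity of elements
of the form `a* ∘ a` (encoded via self-adjoint square roots). -/
class CStarCategory {Obj : Type u} (Hom : Obj → Obj → Type v)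
    [∀ x y, NormedAddCommGroup (Hom x y)] [∀ x y, NormedSpace ℂ (Hom x y)]
    [∀ x y, CompleteSpace (Hom x y)] : Type (max u v) where
  comp : ∀ {x y z : Obj}, Hom y z → Hom x y → Hom x z
  adj : ∀ {x y : Obj}, Hom x y → Hom y x
  comp_assoc : ∀ {w x y z : Obj} (f : Hom y z) (g : Hom x y) (h : Hom w x),
      comp (comp f g) h = comp f (comp g h)
  comp_add_left : ∀ {x y z : Obj} (f f' : Hom y z) (g : Hom x y),
      comp (f + f') g = comp f g + comp f' g
  comp_add_right : ∀ {x y z : Obj} (f : Hom y z) (g g' : Hom x y),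
      comp f (g + g') = comp f g + comp f g'
  comp_smul_left : ∀ {x y z : Obj} (c : ℂ) (f : Hom y z) (g : Hom x y),
      comp (c • f) g = c • comp f g
  comp_smul_right : ∀ {x y z : Obj} (c : ℂ) (f : Hom y z) (g : Hom x y),
      comp f (c • g) = c • comp f g
  norm_comp_le : ∀ {x y z : Obj} (f : Hom y z) (g : Hom x y), ‖comp f g‖ ≤ ‖f‖ * ‖g‖
  adj_adj : ∀ {x y : Obj} (f : Hom x y), adj (adj f) = f
  adj_add : ∀ {x y : Obj} (f g : Hom x y), adj (f + g) = adj f + adj g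
  adj_smul : ∀ {x y : Obj} (c : ℂ) (f : Hom x y), adj (c • f) = (starRingEnd ℂ) c • adj f
  adj_comp : ∀ {x y z : Obj} (f : Hom y z) (g : Hom x y), adj (comp f g) = comp (adj g) (adj f)
  norm_adj_comp_self : ∀ {x y : Obj} (a : Hom x y), ‖comp (adj a) a‖ = ‖a‖ * ‖a‖
  pos_adj_comp_self : ∀ {x y : Obj} (a : Hom x y),
      ∃ b : Hom x x, adj b = b ∧ comp (adj a) a = comp b b

infixl:70 " ⊛ " => CStarCategory.comp
postfix:max "†" => CStarCategory.adj

section CStarBasics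

variable {Obj : Type u} {Hom : Obj → Obj → Type v}
  [∀ x y, NormedAddCommGroup (Hom x y)] [∀ x y, NormedSpace ℂ (Hom x y)]
  [∀ x y, CompleteSpace (Hom x y)] [CStarCategory Hom]

/-- Positivity of an endomorphism in a C*-category: it is of the form `b* ∘ b`. -/
def IsPos {x : Obj} (s : Hom x x) : Prop :=
  ∃ (z : Obj) (b : Hom x z), s = (b†) ⊛ b

/-- An approximate unit for the C*-algebra `Hom x x`: a directed net of positive,
norm-bounded, increasing elements with `‖e_i ∘ c - c‖ → 0` for every `c`. -/
structure IsApproxUnit {ι : Type u'} [Preorder ι] {x : Obj} (e : ι → Hom x x) : Prop where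
  nonempty : Nonempty ι
  directed : ∀ i j : ι, ∃ k, i ≤ k ∧ j ≤ k
  norm_le_one : ∀ i, ‖e i‖ ≤ 1
  pos : ∀ i, IsPos (e i)
  mono : ∀ i j, i ≤ j → IsPos (e j - e i)
  tendsto : ∀ c : Hom x x, Tendsto (fun i => ‖(e i ⊛ c) - c‖) atTop (nhds 0)

end CStarBasics

/-- Unitality, as a property of a C*-category. -/
def IsUnitalCStarCat {Obj : Type u} (Hom : Obj → Obj → Type v)
    [∀ x y, NormedAddCommGroup (Hom x y)] [∀ x y, NormedSpace ℂ (Hom x y)]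
    [∀ x y, CompleteSpace (Hom x y)] [CStarCategory Hom] : Prop :=
  ∀ x : Obj, ∃ e : Hom x x,
    (∀ {y : Obj} (a : Hom y x), e ⊛ a = a) ∧ (∀ {y : Obj} (b : Hom x y), b ⊛ e = b)

/-- A right Hilbert module over a C*-category: a ℂ-linear functor into vector spaces
equipped with `Hom`-valued inner products; each fiber is a Banach space whose norm is
induced by the inner product. -/
structure HilbMod {Obj : Type u} (Hom : Obj → Obj → Type v)
    [∀ x y, NormedAddCommGroup (Hom x y)] [∀ x y, NormedSpace ℂ (Hom x y)]
    [∀ x y, CompleteSpace (Hom x y)] [CStarCategory Hom] : Type (max u (v + 1)) where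
  carrier : Obj → Type v
  [nacg : ∀ x, NormedAddCommGroup (carrier x)]
  [nsp : ∀ x, NormedSpace ℂ (carrier x)]
  [cs : ∀ x, CompleteSpace (carrier x)]
  smulA : ∀ {x w : Obj}, carrier x → Hom w x → carrier w
  inner : ∀ {y z : Obj}, carrier z → carrier y → Hom y z
  smulA_add_left : ∀ {x w : Obj} (e e' : carrier x) (a : Hom w x),
      smulA (e + e') a = smulA e a + smulA e' a
  smulA_add_right : ∀ {x w : Obj} (e : carrier x) (a a' : Hom w x),
      smulA e (a + a') = smulA e a + smulA e a'
  smulA_smul_left : ∀ {x w : Obj} (c : ℂ) (e : carrier x) (a : Hom w x),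
      smulA (c • e) a = c • smulA e a
  smulA_smul_right : ∀ {x w : Obj} (c : ℂ) (e : carrier x) (a : Hom w x),
      smulA e (c • a) = c • smulA e a
  smulA_comp : ∀ {x w v : Obj} (e : carrier x) (a : Hom w x) (b : Hom v w),
      smulA (smulA e a) b = smulA e (a ⊛ b)
  inner_add_left : ∀ {y z : Obj} (e e' : carrier z) (f : carrier y),
      inner (e + e') f = inner e f + inner e' f
  inner_add_right : ∀ {y z : Obj} (e : carrier z) (f f' : carrier y),
      inner e (f + f') = inner e f + inner e f'
  inner_smul_right : ∀ {y z : Obj} (c : ℂ) (e : carrier z) (f : carrier y),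
      inner e (c • f) = c • inner e f
  adj_inner : ∀ {y z : Obj} (e : carrier z) (f : carrier y), (inner e f)† = inner f e
  inner_smulA : ∀ {y z w : Obj} (e : carrier z) (f : carrier y) (a : Hom w y),
      inner e (smulA f a) = inner e f ⊛ a
  inner_self_pos : ∀ {x : Obj} (e : carrier x), ∃ (z : Obj) (b : Hom x z),
      inner e e = (b†) ⊛ b
  inner_self_eq_zero : ∀ {x : Obj} (e : carrier x), inner e e = 0 → e = 0
  norm_eq : ∀ {x : Obj} (e : carrier x), ‖e‖ = Real.sqrt ‖inner e e‖

attribute [instance] HilbMod.nacg HilbMod.nsp HilbMod.cs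

section HilbModBasics

variable {Obj : Type u} {Hom : Obj → Obj → Type v}
  [∀ x y, NormedAddCommGroup (Hom x y)] [∀ x y, NormedSpace ℂ (Hom x y)]
  [∀ x y, CompleteSpace (Hom x y)] [CStarCategory Hom]

theorem HilbMod.inner_zero_left (M : HilbMod Hom) {y z : Obj} (f : M.carrier y) :
    M.inner (0 : M.carrier z) f = 0 := by
  have h := M.inner_add_left (0 : M.carrier z) 0 f
  rw [add_zero] at h
  exact left_eq_add.mp h

theorem HilbMod.inner_zero_right (M : HilbMod Hom) {y z : Obj} (e : M.carrier z) :
    M.inner e (0 : M.carrier y) = 0 := by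
  have h := M.inner_add_right e (0 : M.carrier y) 0
  rw [add_zero] at h
  exact left_eq_add.mp h

theorem HilbMod.inner_smul_left (M : HilbMod Hom) {y z : Obj} (c : ℂ)
    (e : M.carrier z) (f : M.carrier y) :
    M.inner (c • e) f = (starRingEnd ℂ) c • M.inner e f := by
  have h : M.inner (c • e) f = (M.inner f (c • e))† := (M.adj_inner f (c • e)).symm
  rw [h, M.inner_smul_right, CStarCategory.adj_smul, M.adj_inner]

theorem HilbMod.inner_smulA_left (M : HilbMod Hom) {x y w : Obj}
    (f : M.carrier x) (a : Hom w x) (g : M.carrier y) :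
    M.inner (M.smulA f a) g = (a†) ⊛ M.inner f g := by
  have h : M.inner (M.smulA f a) g = (M.inner g (M.smulA f a))† :=
    (M.adj_inner g (M.smulA f a)).symm
  rw [h, M.inner_smulA, CStarCategory.adj_comp, M.adj_inner]

/-- A bounded adjointable operator between Hilbert modules over a C*-category,
encoded by a pair of adjoint maps. -/
structure HilbOp (M N : HilbMod Hom) : Type (max u v) where
  toFun : ∀ x, M.carrier x → N.carrier x
  adjFun : ∀ x, N.carrier x → M.carrier x
  adjoint_prop : ∀ {y z : Obj} (e : M.carrier z) (f : N.carrier y),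
      N.inner (toFun z e) f = M.inner e (adjFun y f)

variable {M N P : HilbMod Hom}

theorem HilbOp.ext' {T S : HilbOp M N} (h1 : ∀ z v, T.toFun z v = S.toFun z v)
    (h2 : ∀ z w, T.adjFun z w = S.adjFun z w) : T = S := by
  cases T with
  | mk tf af ap =>
    cases S with
    | mk tf' af' ap' =>
      have e1 : tf = tf' := funext fun z => funext fun v => h1 z v
      subst e1
      have e2 : af = af' := funext fun z => funext fun w => h2 z w
      subst e2
      rfl

/-- Composition of operators. -/
def HilbOp.comp (S : HilbOp N P) (T : HilbOp M N) : HilbOp M P where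
  toFun z v := S.toFun z (T.toFun z v)
  adjFun z w := T.adjFun z (S.adjFun z w)
  adjoint_prop e f := by rw [S.adjoint_prop, T.adjoint_prop]

/-- The identity operator. -/
def HilbOp.id (M : HilbMod Hom) : HilbOp M M where
  toFun _ v := v
  adjFun _ v := v
  adjoint_prop _ _ := rfl

/-- Adjoint (involution) of an operator. -/
def HilbOp.star (T : HilbOp M N) : HilbOp N M where
  toFun := T.adjFun
  adjFun := T.toFun
  adjoint_prop e f := by
    have h := congrArg CStarCategory.adj (T.adjoint_prop f e)
    rw [N.adj_inner, M.adj_inner] at h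
    exact h.symm

instance : Zero (HilbOp M N) :=
  ⟨{ toFun := fun _ _ => 0
     adjFun := fun _ _ => 0
     adjoint_prop := fun e f => by
       rw [HilbMod.inner_zero_left, HilbMod.inner_zero_right] }⟩

instance : Add (HilbOp M N) :=
  ⟨fun T S =>
    { toFun := fun z v => T.toFun z v + S.toFun z v
      adjFun := fun z w => T.adjFun z w + S.adjFun z w
      adjoint_prop := fun e f => by
        rw [N.inner_add_left, M.inner_add_right, T.adjoint_prop, S.adjoint_prop] }⟩

instance : SMul ℂ (HilbOp M N) :=
  ⟨fun c T =>
    { toFun := fun z v => c • T.toFun z v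
      adjFun := fun z w => (starRingEnd ℂ) c • T.adjFun z w
      adjoint_prop := fun e f => by
        rw [HilbMod.inner_smul_left, M.inner_smul_right, T.adjoint_prop] }⟩

instance : AddCommMonoid (HilbOp M N) where
  add_assoc T S R := HilbOp.ext' (fun z v => add_assoc _ _ _) (fun z w => add_assoc _ _ _)
  zero_add T := HilbOp.ext' (fun z v => zero_add _) (fun z w => zero_add _)
  add_zero T := HilbOp.ext' (fun z v => add_zero _) (fun z w => add_zero _)
  add_comm T S := HilbOp.ext' (fun z v => add_comm _ _) (fun z w => add_comm _ _)
  nsmul := nsmulRec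

/-- The operator norm of an operator between Hilbert modules. -/
noncomputable def opNorm (T : HilbOp M N) : ℝ :=
  sInf {C : ℝ | 0 ≤ C ∧ ∀ (z : Obj) (v : M.carrier z), ‖T.toFun z v‖ ≤ C * ‖v‖}

/-- The rank-one operator `θ^{f,e} : v ↦ f·⟨e,v⟩`. -/
def thetaOp {x : Obj} (f : N.carrier x) (e : M.carrier x) : HilbOp M N where
  toFun z v := N.smulA f (M.inner e v)
  adjFun z w := M.smulA e (N.inner f w)
  adjoint_prop v w := by
    rw [HilbMod.inner_smulA_left, M.adj_inner, M.inner_smulA]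

/-- Compact operators: norm-limits of finite sums of rank-one operators. -/
def IsCompactOp (T : HilbOp M N) : Prop :=
  ∀ ε : ℝ, 0 < ε → ∃ (n : ℕ) (w : Fin n → Obj) (f : ∀ i, N.carrier (w i))
    (e : ∀ i, M.carrier (w i)), ∀ (z : Obj) (v : M.carrier z),
      ‖T.toFun z v - ∑ i, N.smulA (f i) (M.inner (e i) v)‖ ≤ ε * ‖v‖

end HilbModBasics

/-- The representable right Hilbert module `h_x = Hom(-, x)`. -/
def repMod {Obj : Type u} (Hom : Obj → Obj → Type v)
    [∀ x y, NormedAddCommGroup (Hom x y)] [∀ x y, NormedSpace ℂ (Hom x y)]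
    [∀ x y, CompleteSpace (Hom x y)] [CStarCategory Hom] (x : Obj) : HilbMod Hom where
  carrier z := Hom z x
  smulA e a := e ⊛ a
  inner e f := (e†) ⊛ f
  smulA_add_left e e' a := CStarCategory.comp_add_left e e' a
  smulA_add_right e a a' := CStarCategory.comp_add_right e a a'
  smulA_smul_left c e a := CStarCategory.comp_smul_left c e a
  smulA_smul_right c e a := CStarCategory.comp_smul_right c e a
  smulA_comp e a b := CStarCategory.comp_assoc e a b
  inner_add_left e e' f := by
    show ((e + e')†) ⊛ f = ((e†) ⊛ f) + ((e'†) ⊛ f)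
    rw [CStarCategory.adj_add, CStarCategory.comp_add_left]
  inner_add_right e f f' := CStarCategory.comp_add_right _ f f'
  inner_smul_right c e f := CStarCategory.comp_smul_right c _ f
  adj_inner e f := by rw [CStarCategory.adj_comp, CStarCategory.adj_adj]
  inner_smulA e f a := (CStarCategory.comp_assoc _ f a).symm
  inner_self_pos e := ⟨x, e, rfl⟩
  inner_self_eq_zero := by
    intro z e h
    have h' : (e†) ⊛ e = 0 := h
    have h2 := CStarCategory.norm_adj_comp_self (Hom := Hom) e
    rw [h', norm_zero] at h2
    have h3 : ‖e‖ = 0 := by nlinarith [norm_nonneg e]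
    exact norm_eq_zero.mp h3
  norm_eq := by
    intro z e
    rw [CStarCategory.norm_adj_comp_self, Real.sqrt_mul_self (norm_nonneg e)]

section YonedaOps

variable {Obj : Type u} {Hom : Obj → Obj → Type v}
  [∀ x y, NormedAddCommGroup (Hom x y)] [∀ x y, NormedSpace ℂ (Hom x y)]
  [∀ x y, CompleteSpace (Hom x y)] [CStarCategory Hom]

/-- The operator `ε_m : h_x → M` sending `a` to `m·a`; its adjoint is `f ↦ ⟨m,f⟩`. -/
def epsOp {M : HilbMod Hom} {x : Obj} (m : M.carrier x) : HilbOp (repMod Hom x) M where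
  toFun z a := M.smulA m a
  adjFun z f := M.inner m f
  adjoint_prop a f := HilbMod.inner_smulA_left M m a f

/-- The Yoneda operator `h_x → h_y` given by postcomposition with `a : Hom x y`. -/
def yonedaOp {x y : Obj} (a : Hom x y) : HilbOp (repMod Hom x) (repMod Hom y) where
  toFun z b := a ⊛ b
  adjFun z c := (a†) ⊛ c
  adjoint_prop b c := by
    show ((a ⊛ b)†) ⊛ c = (b†) ⊛ ((a†) ⊛ c)
    exact (congrArg (fun t => t ⊛ c) (CStarCategory.adj_comp (Hom := Hom) a b)).trans
      (CStarCategory.comp_assoc _ _ _)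

end YonedaOps
section AuxLemmas

open CStarCategory

variable {Obj : Type u} {Hom : Obj → Obj → Type v}
  [∀ x y, NormedAddCommGroup (Hom x y)] [∀ x y, NormedSpace ℂ (Hom x y)]
  [∀ x y, CompleteSpace (Hom x y)] [CStarCategory Hom]

theorem ccomp_zero {x y z : Obj} (f : Hom y z) : f ⊛ (0 : Hom x y) = 0 := by
  have h := CStarCategory.comp_add_right f (0 : Hom x y) 0
  rw [add_zero] at h
  exact left_eq_add.mp h

theorem czero_comp {x y z : Obj} (g : Hom x y) : (0 : Hom y z) ⊛ g = 0 := by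
  have h := CStarCategory.comp_add_left (0 : Hom y z) 0 g
  rw [add_zero] at h
  exact left_eq_add.mp h

theorem ccomp_neg_right {x y z : Obj} (f : Hom y z) (g : Hom x y) : f ⊛ (-g) = -(f ⊛ g) := by
  rw [← neg_one_smul ℂ g, CStarCategory.comp_smul_right, neg_one_smul]

theorem ccomp_neg_left {x y z : Obj} (f : Hom y z) (g : Hom x y) : (-f) ⊛ g = -(f ⊛ g) := by
  rw [← neg_one_smul ℂ f, CStarCategory.comp_smul_left, neg_one_smul]

theorem ccomp_sub_left {x y z : Obj} (f f' : Hom y z) (g : Hom x y) :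
    (f - f') ⊛ g = f ⊛ g - f' ⊛ g := by
  rw [sub_eq_add_neg, CStarCategory.comp_add_left, ccomp_neg_left, ← sub_eq_add_neg]

theorem ccomp_sub_right {x y z : Obj} (f : Hom y z) (g g' : Hom x y) :
    f ⊛ (g - g') = f ⊛ g - f ⊛ g' := by
  rw [sub_eq_add_neg, CStarCategory.comp_add_right, ccomp_neg_right, ← sub_eq_add_neg]

theorem cadj_sub {x y : Obj} (f g : Hom x y) : (f - g)† = (f†) - (g†) := by
  rw [sub_eq_add_neg, adj_add, ← neg_one_smul ℂ g, adj_smul, map_neg, map_one,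
    neg_one_smul, ← sub_eq_add_neg]

theorem ccomp_sum_left {ι : Type} {x y z : Obj} (s : Finset ι) (f : ι → Hom y z) (g : Hom x y) :
    (∑ i ∈ s, f i) ⊛ g = ∑ i ∈ s, f i ⊛ g := by
  induction s using Finset.cons_induction with
  | empty => simpa using czero_comp g
  | cons i s hi ih => rw [Finset.sum_cons, Finset.sum_cons, CStarCategory.comp_add_left, ih]

theorem cnorm_le_adj_norm {x y : Obj} (a : Hom x y) : ‖a‖ ≤ ‖a†‖ := by
  have h1 := norm_adj_comp_self (Hom := Hom) a
  have h2 := norm_comp_le (a†) a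
  rcases (norm_nonneg a).eq_or_lt' with h0 | h0
  · exact h0.le.trans (norm_nonneg _)
  · rw [h1] at h2
    exact le_of_mul_le_mul_right h2 h0

theorem cnorm_adj {x y : Obj} (a : Hom x y) : ‖a†‖ = ‖a‖ := by
  refine le_antisymm ?_ (cnorm_le_adj_norm a)
  have h := cnorm_le_adj_norm (a†)
  rwa [adj_adj] at h

theorem cnorm_comp_adj_self {x y : Obj} (a : Hom x y) : ‖a ⊛ (a†)‖ = ‖a‖ * ‖a‖ := by
  have h := norm_adj_comp_self (Hom := Hom) (a†)
  rwa [adj_adj, cnorm_adj] at h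

theorem cnorm_le_of_comp_le {x y : Obj} (a : Hom x y) (C : ℝ) (hC : 0 ≤ C)
    (h : ∀ (z : Obj) (v : Hom z x), ‖a ⊛ v‖ ≤ C * ‖v‖) : ‖a‖ ≤ C := by
  have h1 := h y (a†)
  rw [cnorm_comp_adj_self, cnorm_adj] at h1
  rcases (norm_nonneg a).eq_or_lt' with h0 | h0
  · exact h0.le.trans hC
  · exact le_of_mul_le_mul_right h1 h0

theorem HilbMod.inner_neg_right (M : HilbMod Hom) {y z : Obj} (e : M.carrier z)
    (f : M.carrier y) : M.inner e (-f) = -(M.inner e f) := by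
  rw [← neg_one_smul ℂ f, M.inner_smul_right, neg_one_smul]

theorem HilbMod.inner_sub_right (M : HilbMod Hom) {y z : Obj} (e : M.carrier z)
    (f f' : M.carrier y) : M.inner e (f - f') = M.inner e f - M.inner e f' := by
  rw [sub_eq_add_neg, M.inner_add_right, M.inner_neg_right, ← sub_eq_add_neg]

theorem HilbMod.inner_neg_left (M : HilbMod Hom) {y z : Obj} (e : M.carrier z)
    (f : M.carrier y) : M.inner (-e) f = -(M.inner e f) := by
  rw [← neg_one_smul ℂ e, M.inner_smul_left, map_neg, map_one, neg_one_smul]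

theorem HilbMod.inner_sub_left (M : HilbMod Hom) {y z : Obj} (e e' : M.carrier z)
    (f : M.carrier y) : M.inner (e - e') f = M.inner e f - M.inner e' f := by
  rw [sub_eq_add_neg, M.inner_add_left, M.inner_neg_left, ← sub_eq_add_neg]

theorem HilbMod.ext_of_inner_left (M : HilbMod Hom) {z : Obj} {d d' : M.carrier z}
    (h : ∀ {w : Obj} (f : M.carrier w), M.inner d f = M.inner d' f) : d = d' := by
  have h0 : M.inner (d - d') (d - d') = 0 := by
    rw [M.inner_sub_left, h (d - d'), sub_self]
  exact sub_eq_zero.mp (M.inner_self_eq_zero _ h0)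

theorem HilbMod.ext_of_inner_right (M : HilbMod Hom) {z : Obj} {d d' : M.carrier z}
    (h : ∀ {w : Obj} (e : M.carrier w), M.inner e d = M.inner e d') : d = d' := by
  have h0 : M.inner (d - d') (d - d') = 0 := by
    rw [M.inner_sub_right, h (d - d'), sub_self]
  exact sub_eq_zero.mp (M.inner_self_eq_zero _ h0)

/-- Uniqueness of adjoints: operators with equal underlying maps are equal. -/
theorem HilbOp.ext_toFun {M N : HilbMod Hom} {T S : HilbOp M N}
    (h : ∀ z v, T.toFun z v = S.toFun z v) : T = S := by
  refine HilbOp.ext' h fun z w => ?_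
  refine M.ext_of_inner_right fun {w'} e => ?_
  rw [← T.adjoint_prop, h, S.adjoint_prop]

/-- Identity coercion into the representable module's carrier. -/
def toCar {x z : Obj} (v : Hom z x) : (repMod Hom x).carrier z := v

end AuxLemmas

section EndAlgebra

open CStarCategory

variable {Obj : Type u} {Hom : Obj → Obj → Type v}
  [∀ x y, NormedAddCommGroup (Hom x y)] [∀ x y, NormedSpace ℂ (Hom x y)]
  [∀ x y, CompleteSpace (Hom x y)] [CStarCategory Hom]

noncomputable instance endNonUnitalNormedRing (x : Obj) : NonUnitalNormedRing (Hom x x) :=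
  { (inferInstance : NormedAddCommGroup (Hom x x)) with
    mul := comp
    left_distrib := fun a b c => CStarCategory.comp_add_right a b c
    right_distrib := fun a b c => CStarCategory.comp_add_left a b c
    mul_assoc := fun a b c => CStarCategory.comp_assoc a b c
    zero_mul := fun a => czero_comp a
    mul_zero := fun a => ccomp_zero a
    norm_mul_le := fun a b => norm_comp_le a b }

instance endStarRing (x : Obj) : StarRing (Hom x x) where
  star := adj
  star_involutive := adj_adj
  star_mul := adj_comp
  star_add := adj_add

instance endCStarRing (x : Obj) : CStarRing (Hom x x) where
  norm_mul_self_le a := le_of_eq (norm_adj_comp_self a).symm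

instance endIsScalarTower (x : Obj) : IsScalarTower ℂ (Hom x x) (Hom x x) where
  smul_assoc c a b := CStarCategory.comp_smul_left c a b

instance endSMulCommClass (x : Obj) : SMulCommClass ℂ (Hom x x) (Hom x x) where
  smul_comm c a b := (CStarCategory.comp_smul_right c a b).symm

instance endStarModule (x : Obj) : StarModule ℂ (Hom x x) where
  star_smul c a := adj_smul c a

noncomputable instance endNonUnitalCStarAlgebra (x : Obj) :
    NonUnitalCStarAlgebra (Hom x x) where

/-- Approximate factorization: `a` is close to `a ⊛ u` for a self-adjoint `u`. -/
theorem approx_factor {x y : Obj} (a : Hom x y) {ε : ℝ} (hε : 0 < ε) :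
    ∃ u : Hom x x, (u†) = u ∧ ‖a - a ⊛ u‖ ≤ ε := by
  set s : Hom x x := (a†) ⊛ a with hs_def
  have hs : IsSelfAdjoint s := by
    show star s = s
    show ((a†) ⊛ a)† = (a†) ⊛ a
    rw [adj_comp, adj_adj]
  set δ : ℝ := ε ^ 4 with hδ_def
  have hδ : (0:ℝ) < δ := by positivity
  set g : ℝ → ℝ := fun t => t ^ 2 / (t ^ 2 + δ) with hg_def
  have hden : ∀ t : ℝ, (0:ℝ) < t ^ 2 + δ := fun t => by positivity
  have hgc : Continuous g := by
    apply Continuous.div (by fun_prop) (by fun_prop)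
    exact fun t => (hden t).ne'
  have hg0 : g 0 = 0 := by simp [hg_def]
  set u : Hom x x := cfcₙ g s with hu_def
  have hu_sa : IsSelfAdjoint u := cfcₙ_predicate g s
  have husa' : (u†) = u := hu_sa
  refine ⟨u, husa', ?_⟩
  have hfun_bound : ∀ t : ℝ, |t * (1 - g t) ^ 2| ≤ ε ^ 2 := by
    intro t
    have h1 : 1 - g t = δ / (t ^ 2 + δ) := by
      rw [hg_def]; field_simp; ring
    have h2 : t * (δ / (t ^ 2 + δ)) ^ 2 = t * δ ^ 2 / (t ^ 2 + δ) ^ 2 := by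
      rw [div_pow, mul_div_assoc]
    rw [h1, h2, abs_div, abs_mul, abs_of_pos (by positivity : (0:ℝ) < (t ^ 2 + δ) ^ 2),
      abs_of_pos (by positivity : (0:ℝ) < δ ^ 2), div_le_iff₀ (by positivity)]
    rw [hδ_def]
    nlinarith [sq_nonneg (|t| * ε ^ 3 - ε ^ 5), abs_nonneg t, sq_abs t,
      pow_pos hε 2, pow_pos hε 4, pow_pos hε 6, sq_nonneg t,
      mul_nonneg (mul_nonneg (sq_nonneg t) (sq_nonneg t)) (sq_nonneg ε),
      mul_nonneg (sq_nonneg t) (pow_pos hε 6).le]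
  have hX : s - s * u - u * s + u * s * u = cfcₙ (fun t => t * (1 - g t) ^ 2) s := by
    have hids : cfcₙ (fun t : ℝ => t) s = s := cfcₙ_id' ℝ s
    have h1 : cfcₙ (fun t : ℝ => t * g t) s = s * u := by
      rw [cfcₙ_mul (fun t : ℝ => t) g s (by fun_prop) (by simp)
        hgc.continuousOn hg0, hids]
    have h2 : cfcₙ (fun t : ℝ => g t * t) s = u * s := by
      rw [cfcₙ_mul g (fun t : ℝ => t) s hgc.continuousOn hg0 (by fun_prop) (by simp), hids]
    have h3 : cfcₙ (fun t : ℝ => g t * t * g t) s = u * s * u := by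
      rw [cfcₙ_mul (fun t : ℝ => g t * t) g s ((hgc.mul continuous_id).continuousOn)
        (by simp [hg0]) hgc.continuousOn hg0, h2]
    have h4 : cfcₙ (fun t : ℝ => t - t * g t - g t * t + g t * t * g t) s
        = s - s * u - u * s + u * s * u := by
      rw [cfcₙ_add (fun t : ℝ => t - t * g t - g t * t) (fun t : ℝ => g t * t * g t) s
          ((((continuous_id.sub (continuous_id.mul hgc)).sub
            (hgc.mul continuous_id))).continuousOn) (by simp [hg0])
          ((hgc.mul continuous_id).mul hgc).continuousOn (by simp [hg0]),
        cfcₙ_sub (fun t : ℝ => t - t * g t) (fun t : ℝ => g t * t) s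
          ((continuous_id.sub (continuous_id.mul hgc)).continuousOn) (by simp [hg0])
          ((hgc.mul continuous_id).continuousOn) (by simp [hg0]),
        cfcₙ_sub (fun t : ℝ => t) (fun t : ℝ => t * g t) s (by fun_prop) (by simp)
          ((continuous_id.mul hgc).continuousOn) (by simp [hg0]),
        hids, h1, h2, h3]
    rw [← h4]
    apply cfcₙ_congr
    intro t _
    ring
  have hXnorm : ‖s - s * u - u * s + u * s * u‖ ≤ ε ^ 2 := by
    rw [hX]
    exact norm_cfcₙ_le fun t _ => by rw [Real.norm_eq_abs]; exact hfun_bound t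
  have hadj : (a - a ⊛ u)† = (a†) - u ⊛ (a†) := by
    rw [cadj_sub, adj_comp, husa']
  have e3 : u * s * u = u ⊛ (s ⊛ u) := CStarCategory.comp_assoc u s u
  have hexp : ((a - a ⊛ u)†) ⊛ (a - a ⊛ u) = s - s * u - u * s + u * s * u := by
    rw [e3, hadj, ccomp_sub_left, ccomp_sub_right, ccomp_sub_right, ← CStarCategory.comp_assoc (a†) a u,
      CStarCategory.comp_assoc u (a†) a, CStarCategory.comp_assoc u (a†) (a ⊛ u), ← CStarCategory.comp_assoc (a†) a u, ← hs_def]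
    show (s - s ⊛ u) - (u ⊛ s - u ⊛ (s ⊛ u)) = s - s ⊛ u - u ⊛ s + u ⊛ (s ⊛ u)
    abel
  have hfinal : ‖a - a ⊛ u‖ * ‖a - a ⊛ u‖ ≤ ε ^ 2 := by
    have h := norm_adj_comp_self (Hom := Hom) (a - a ⊛ u)
    rw [hexp] at h
    rw [← h]
    exact hXnorm
  nlinarith [norm_nonneg (a - a ⊛ u)]

end EndAlgebra

/-- The Yoneda functor sending `a : A(x,y)` to the operator
`h_x → h_y` of postcomposition with `a` is an isometric C*-functor whose image is
exactly the compact operators `K(h_x, h_y)`.  If `A` is unital, it is moreover full: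
every bounded adjointable operator `h_x → h_y` is of this form. -/
theorem yoneda_isometric_onto_compacts {Obj : Type u} {Hom : Obj → Obj → Type v}
    [∀ x y, NormedAddCommGroup (Hom x y)] [∀ x y, NormedSpace ℂ (Hom x y)]
    [∀ x y, CompleteSpace (Hom x y)] [CStarCategory Hom] :
    (∀ {x y : Obj} (a b : Hom x y) (c : ℂ),
      yonedaOp (a + b) = yonedaOp a + yonedaOp b ∧ yonedaOp (c • a) = c • yonedaOp a) ∧
    (∀ {x y z : Obj} (a : Hom y z) (b : Hom x y),
      yonedaOp (a ⊛ b) = (yonedaOp a).comp (yonedaOp b)) ∧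
    (∀ {x y : Obj} (a : Hom x y), HilbOp.star (yonedaOp a) = yonedaOp (a†)) ∧
    (∀ {x y : Obj} (a : Hom x y), opNorm (yonedaOp a) = ‖a‖) ∧
    (∀ {x y : Obj} (a : Hom x y), IsCompactOp (yonedaOp a)) ∧
    (∀ {x y : Obj} (T : HilbOp (repMod Hom x) (repMod Hom y)),
      IsCompactOp T → ∃ a : Hom x y, T = yonedaOp a) ∧
    (IsUnitalCStarCat Hom →
      ∀ {x y : Obj} (T : HilbOp (repMod Hom x) (repMod Hom y)),
        ∃ a : Hom x y, T = yonedaOp a) := by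
  open CStarCategory in
  refine ⟨?_, ?_, ?_, ?_, ?_, ?_, ?_⟩
  · -- additivity and homogeneity
    intro x y a b c
    constructor
    · refine HilbOp.ext' (fun z v => CStarCategory.comp_add_left a b v) (fun z w => ?_)
      show ((a + b)†) ⊛ w = (a†) ⊛ w + (b†) ⊛ w
      rw [adj_add]; exact CStarCategory.comp_add_left _ _ _
    · refine HilbOp.ext' (fun z v => CStarCategory.comp_smul_left c a v) (fun z w => ?_)
      show ((c • a)†) ⊛ w = (starRingEnd ℂ) c • ((a†) ⊛ w)
      rw [adj_smul]; exact CStarCategory.comp_smul_left _ _ _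
  · -- multiplicativity
    intro x y z a b
    refine HilbOp.ext' (fun w v => CStarCategory.comp_assoc a b v) (fun w v => ?_)
    show ((a ⊛ b)†) ⊛ v = (b†) ⊛ ((a†) ⊛ v)
    rw [adj_comp]; exact CStarCategory.comp_assoc _ _ _
  · -- star
    intro x y a
    refine HilbOp.ext' (fun z v => rfl) (fun z v => ?_)
    show a ⊛ v = ((a†)†) ⊛ v
    rw [adj_adj]
  · -- isometry
    intro x y a
    unfold opNorm
    have hmem : ‖a‖ ∈ {C : ℝ | 0 ≤ C ∧ ∀ (z : Obj) (v : (repMod Hom x).carrier z),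
        ‖(yonedaOp (Hom := Hom) a).toFun z v‖ ≤ C * ‖v‖} :=
      ⟨norm_nonneg a, fun z v => norm_comp_le a v⟩
    have hlb : ∀ C ∈ {C : ℝ | 0 ≤ C ∧ ∀ (z : Obj) (v : (repMod Hom x).carrier z),
        ‖(yonedaOp (Hom := Hom) a).toFun z v‖ ≤ C * ‖v‖}, ‖a‖ ≤ C :=
      fun C hC => cnorm_le_of_comp_le a C hC.1 hC.2
    exact le_antisymm (csInf_le ⟨‖a‖, hlb⟩ hmem) (le_csInf ⟨‖a‖, hmem⟩ hlb)
  · -- compactness of yonedaOp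
    intro x y a ε hε
    obtain ⟨u, hu, hau⟩ := approx_factor a hε
    refine ⟨1, fun _ => x, fun _ => a, fun _ => u, fun z v => ?_⟩
    rw [Fin.sum_univ_one]
    change Hom z x at v
    have key : ‖a ⊛ v - a ⊛ ((u†) ⊛ v)‖ ≤ ε * ‖v‖ := by
      rw [hu, ← CStarCategory.comp_assoc, ← ccomp_sub_left]
      calc ‖(a - a ⊛ u) ⊛ v‖ ≤ ‖a - a ⊛ u‖ * ‖v‖ := norm_comp_le _ _
        _ ≤ ε * ‖v‖ := mul_le_mul_of_nonneg_right hau (norm_nonneg v)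
    exact key
  · -- compacts are in the image
    intro x y T hT
    have H : ∀ n : ℕ, ∃ b : Hom x y, ∀ (z : Obj) (v : Hom z x),
        ‖T.toFun z v - toCar (b ⊛ v)‖ ≤ (1 / ((n:ℝ) + 1)) * ‖v‖ := by
      intro n
      obtain ⟨m, w, f, e, hfe⟩ := hT (1 / ((n:ℝ) + 1)) (by positivity)
      refine ⟨∑ i, f i ⊛ ((e i)†), fun z v => ?_⟩
      have hsum : (∑ i, f i ⊛ ((e i)†)) ⊛ v
          = ∑ i, (repMod Hom y).smulA (f i) ((repMod Hom x).inner (e i) v) := by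
        rw [ccomp_sum_left]
        exact Finset.sum_congr rfl fun i _ => CStarCategory.comp_assoc (f i) ((e i)†) v
      rw [toCar, hsum]
      exact hfe z v
    choose b hb using H
    have hdiff : ∀ n m : ℕ, ‖b n - b m‖ ≤ 1 / ((n:ℝ) + 1) + 1 / ((m:ℝ) + 1) := by
      intro n m
      apply cnorm_le_of_comp_le _ _ (by positivity)
      intro z v
      have hrw : (b n - b m) ⊛ v
          = toCar (b n ⊛ v) - toCar (b m ⊛ v) := ccomp_sub_left (b n) (b m) v
      rw [hrw]
      calc ‖toCar (b n ⊛ v) - toCar (b m ⊛ v)‖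
          = ‖(toCar (b n ⊛ v) - T.toFun z v) + (T.toFun z v - toCar (b m ⊛ v))‖ := by
            congr 1; abel
        _ ≤ ‖toCar (b n ⊛ v) - T.toFun z v‖ + ‖T.toFun z v - toCar (b m ⊛ v)‖ :=
            norm_add_le _ _
        _ ≤ (1 / ((n:ℝ) + 1)) * ‖v‖ + (1 / ((m:ℝ) + 1)) * ‖v‖ := by
            refine add_le_add ?_ (hb m z v)
            rw [norm_sub_rev]
            exact hb n z v
        _ = (1 / ((n:ℝ) + 1) + 1 / ((m:ℝ) + 1)) * ‖v‖ := by ring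
    have hcauchy : CauchySeq b := by
      apply cauchySeq_of_le_tendsto_0 (fun N : ℕ => 2 / ((N:ℝ) + 1))
      · intro n m N hn hm
        rw [dist_eq_norm]
        calc ‖b n - b m‖ ≤ 1 / ((n:ℝ) + 1) + 1 / ((m:ℝ) + 1) := hdiff n m
          _ ≤ 1 / ((N:ℝ) + 1) + 1 / ((N:ℝ) + 1) := by
              gcongr <;> exact_mod_cast ‹_›
          _ = 2 / ((N:ℝ) + 1) := by ring
      · have h1 := tendsto_one_div_add_atTop_nhds_zero_nat.const_mul (2:ℝ)
        simpa [mul_one_div, div_eq_mul_inv] using h1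
    obtain ⟨L, hL⟩ := cauchySeq_tendsto_of_complete hcauchy
    refine ⟨L, HilbOp.ext_toFun fun z v => ?_⟩
    show T.toFun z v = toCar (L ⊛ v)
    have hcmp : ∀ n : ℕ, ‖toCar (b n ⊛ v) - toCar (L ⊛ v)‖ ≤ ‖b n - L‖ * ‖v‖ := by
      intro n
      have hrw : (b n - L) ⊛ v = toCar (b n ⊛ v) - toCar (L ⊛ v) :=
        ccomp_sub_left (b n) L v
      have := norm_comp_le (b n - L) v
      rwa [hrw] at this
    have hbound : ∀ n : ℕ,
        ‖T.toFun z v - toCar (L ⊛ v)‖ ≤ (1 / ((n:ℝ) + 1)) * ‖v‖ + ‖b n - L‖ * ‖v‖ := by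
      intro n
      calc ‖T.toFun z v - toCar (L ⊛ v)‖
          = ‖(T.toFun z v - toCar (b n ⊛ v)) + (toCar (b n ⊛ v) - toCar (L ⊛ v))‖ := by
            congr 1; abel
        _ ≤ ‖T.toFun z v - toCar (b n ⊛ v)‖ + ‖toCar (b n ⊛ v) - toCar (L ⊛ v)‖ :=
            norm_add_le _ _
        _ ≤ (1 / ((n:ℝ) + 1)) * ‖v‖ + ‖b n - L‖ * ‖v‖ :=
            add_le_add (hb n z v) (hcmp n)
    have htend : Tendsto (fun n : ℕ => (1 / ((n:ℝ) + 1)) * ‖v‖ + ‖b n - L‖ * ‖v‖)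
        atTop (nhds 0) := by
      have h1 := tendsto_one_div_add_atTop_nhds_zero_nat.mul_const ‖v‖
      have h2 := (tendsto_iff_norm_sub_tendsto_zero.mp hL).mul_const ‖v‖
      simpa using h1.add h2
    have hle : ‖T.toFun z v - toCar (L ⊛ v)‖ ≤ 0 :=
      le_of_tendsto_of_tendsto' tendsto_const_nhds htend hbound
    exact sub_eq_zero.mp (norm_eq_zero.mp (le_antisymm hle (norm_nonneg _)))
  · -- fullness in the unital case
    intro hU x y T
    obtain ⟨e, he1, he2⟩ := hU x
    have he1' : ∀ {w : Obj} (c : Hom w x), (e†) ⊛ c = c := by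
      intro w c
      have h : ((e†) ⊛ c)† = c† := by
        rw [adj_comp, adj_adj]
        exact he2 (c†)
      calc (e†) ⊛ c = (((e†) ⊛ c)†)† := (adj_adj _).symm
        _ = (c†)† := by rw [h]
        _ = c := adj_adj c
    refine ⟨T.toFun x e, HilbOp.ext_toFun fun z v => ?_⟩
    show T.toFun z v = T.toFun x e ⊛ v
    refine (repMod Hom y).ext_of_inner_left fun {w} f => ?_
    have key : ((T.toFun x e)†) ⊛ f = T.adjFun w f := by
      have h : ((T.toFun x e)†) ⊛ f = (e†) ⊛ (T.adjFun w f) := T.adjoint_prop e f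
      exact h.trans (he1' _)
    calc (repMod Hom y).inner (T.toFun z v) f
        = (v†) ⊛ (T.adjFun w f) := T.adjoint_prop v f
      _ = (v†) ⊛ (((T.toFun x e)†) ⊛ f) := by rw [← key]
      _ = ((T.toFun x e ⊛ v)†) ⊛ f :=
          ((congrArg (fun t => t ⊛ f) (adj_comp (T.toFun x e) v)).trans
            (CStarCategory.comp_assoc _ _ _)).symm
      _ = (repMod Hom y).inner (T.toFun x e ⊛ v) f := rfl
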